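/- Fix reals z1, z2 with z2 < 0 < z1, nonnegative reals g11, g22, g12, and c1⁰, c2⁰ > 0. Set m = (z1/z2)·(1/c2⁰ + g22) − g12 and M = (z1·g22 − z2·g12)/(z2·(1 + g11·c1⁰) − z1·g12·c1⁰). Then there exists a differentiable function c1 : (0, ∞) → ℝ such that c1(c2) > 0 for all c2 > 0, c1(c2⁰) = c1⁰, c1′(c2) = F(c1(c2), c2) for all c2 > 0, c1 is strictly decreasing, and for all c2 ≥ c2⁰ it satisfies the Gronwall bounds c1⁰·exp(m·(c2 − c2⁰)) ≤ c1(c2) ≤ c1⁰·exp(M·(c2 − c2⁰)). -/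

import Mathlib

/-- The right-hand side of the trajectory ODE `dc1/dc2 = F(c1, c2)` for stationary
solutions of the PNP-steric system. -/
noncomputable def F (z1 z2 g11 g22 g12 c1 c2 : ℝ) : ℝ :=
  (z1 * (1 / c2 + g22) - z2 * g12) / (z2 * (1 / c1 + g11) - z1 * g12)

set_option maxHeartbeats 800000

lemma key_alg (z1 z2 g11 g22 g12 x t : ℝ) (hx : 0 < x) (ht : 0 < t)
    (hd : 0 < -z2 + (z1 * g12 - z2 * g11) * x) :
    x * ((-z2 + (z1 * g12 - z2 * g11) * Real.exp (Real.log x))⁻¹ *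
      (-(z1 / t + (z1 * g22 - z2 * g12)))) = F z1 z2 g11 g22 g12 x t := by
  rw [Real.exp_log hx]
  have hd2 : z2 * (1 / x + g11) - z1 * g12 = -(-z2 + (z1 * g12 - z2 * g11) * x) / x := by
    field_simp; ring
  have hne : z2 * (1 / x + g11) - z1 * g12 ≠ 0 := by
    rw [hd2]
    exact div_ne_zero (neg_ne_zero.mpr hd.ne') hx.ne'
  rw [F, eq_div_iff hne, hd2]
  have h1 : x * x⁻¹ = 1 := mul_inv_cancel₀ hx.ne'
  have h2 : (-z2 + (z1 * g12 - z2 * g11) * x) * (-z2 + (z1 * g12 - z2 * g11) * x)⁻¹ = 1 :=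
    mul_inv_cancel₀ hd.ne'
  linear_combination (-(-(z1 / t + (z1 * g22 - z2 * g12))) *
    ((-z2 + (z1 * g12 - z2 * g11) * x) * (-z2 + (z1 * g12 - z2 * g11) * x)⁻¹)) * h1 +
    (-(-(z1 / t + (z1 * g22 - z2 * g12)))) * h2

/-- separable piece in `c1` (after substituting `c1 = exp u`). -/
noncomputable def psi (z2 b u : ℝ) : ℝ := -z2 * u + b * Real.exp u

/-- separable piece in `c2`. -/
noncomputable def Hf (z1 q t : ℝ) : ℝ := z1 * Real.log t + q * t

lemma psi_hasDeriv (z2 b u : ℝ) :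
    HasDerivAt (psi z2 b) (-z2 + b * Real.exp u) u := by
  have h1 : HasDerivAt (fun u : ℝ => -z2 * u) (-z2) u := by
    simpa using (hasDerivAt_id u).const_mul (-z2)
  have h2 : HasDerivAt (fun u : ℝ => b * Real.exp u) (b * Real.exp u) u := by
    simpa using (Real.hasDerivAt_exp u).const_mul b
  exact h1.add h2

lemma psi_deriv_pos {z2 b : ℝ} (hz2 : z2 < 0) (hb : 0 ≤ b) (u : ℝ) :
    0 < -z2 + b * Real.exp u := by
  have := mul_nonneg hb (Real.exp_pos u).le
  linarith

lemma psi_mono {z2 b : ℝ} (hz2 : z2 < 0) (hb : 0 ≤ b) : StrictMono (psi z2 b) :=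
  strictMono_of_deriv_pos fun u => by
    rw [(psi_hasDeriv z2 b u).deriv]
    exact psi_deriv_pos hz2 hb u

lemma psi_surj {z2 b : ℝ} (hz2 : z2 < 0) (hb : 0 ≤ b) :
    Function.Surjective (psi z2 b) := by
  have hcont : Continuous (psi z2 b) := by
    unfold psi; continuity
  have htop : Filter.Tendsto (psi z2 b) Filter.atTop Filter.atTop := by
    apply Filter.tendsto_atTop_mono
      (fun u => le_add_of_nonneg_right (mul_nonneg hb (Real.exp_pos u).le) :
        ∀ u, -z2 * u ≤ psi z2 b u)
    exact (Filter.tendsto_const_mul_atTop_of_pos (by linarith)).mpr Filter.tendsto_id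
  have hbot : Filter.Tendsto (psi z2 b) Filter.atBot Filter.atBot := by
    have h1 : Filter.Tendsto (fun u : ℝ => -z2 * u) Filter.atBot Filter.atBot :=
      Filter.Tendsto.const_mul_atBot (by linarith) Filter.tendsto_id
    unfold psi
    apply Filter.tendsto_atBot_add_right_of_ge' _ b h1
    filter_upwards [Filter.eventually_le_atBot (0 : ℝ)] with u hu
    calc b * Real.exp u ≤ b * 1 := by
          exact mul_le_mul_of_nonneg_left (Real.exp_le_one_iff.mpr hu) hb
      _ = b := mul_one b
  exact hcont.surjective htop hbot

/-- Existence part of Lemma 2(1) of the paper: through every point `(c10, c20)` of the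
positive quadrant there is a solution trajectory, defined for all `c2 > 0`, that remains in
the positive quadrant, is strictly decreasing, and satisfies the Gronwall bounds. -/
theorem stmt2 (z1 z2 g11 g22 g12 c10 c20 : ℝ)
    (hz2 : z2 < 0) (hz1 : 0 < z1)
    (hg11 : 0 ≤ g11) (hg22 : 0 ≤ g22) (hg12 : 0 ≤ g12)
    (hc10 : 0 < c10) (hc20 : 0 < c20)
    (m M : ℝ)
    (hm : m = z1 / z2 * (1 / c20 + g22) - g12)
    (hM : M = (z1 * g22 - z2 * g12) / (z2 * (1 + g11 * c10) - z1 * g12 * c10)) :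
    ∃ c1 : ℝ → ℝ,
      (∀ c2 : ℝ, 0 < c2 → 0 < c1 c2) ∧
      c1 c20 = c10 ∧
      (∀ c2 : ℝ, 0 < c2 → HasDerivAt c1 (F z1 z2 g11 g22 g12 (c1 c2) c2) c2) ∧
      StrictAntiOn c1 (Set.Ioi (0 : ℝ)) ∧
      (∀ c2 : ℝ, c20 ≤ c2 →
        c10 * Real.exp (m * (c2 - c20)) ≤ c1 c2 ∧
        c1 c2 ≤ c10 * Real.exp (M * (c2 - c20))) := by
  have hb : (0:ℝ) ≤ z1 * g12 - z2 * g11 := by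
    have h1 : 0 ≤ z1 * g12 := mul_nonneg hz1.le hg12
    have h2 : z2 * g11 ≤ 0 := mul_nonpos_of_nonpos_of_nonneg hz2.le hg11
    linarith
  have hq : (0:ℝ) ≤ z1 * g22 - z2 * g12 := by
    have h1 : 0 ≤ z1 * g22 := mul_nonneg hz1.le hg22
    have h2 : z2 * g12 ≤ 0 := mul_nonpos_of_nonpos_of_nonneg hz2.le hg12
    linarith
  set b := z1 * g12 - z2 * g11 with hbdef
  set q := z1 * g22 - z2 * g12 with hqdef
  obtain ⟨E, hEeq⟩ : ∃ E : ℝ ≃o ℝ, ∀ x, E x = psi z2 b x :=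
    ⟨StrictMono.orderIsoOfSurjective _ (psi_mono hz2 hb) (psi_surj hz2 hb), fun x =>
      congrFun (StrictMono.coe_orderIsoOfSurjective _ (psi_mono hz2 hb) (psi_surj hz2 hb)) x⟩
  have hEpsi : ∀ y : ℝ, psi z2 b (E.symm y) = y := fun y => by
    rw [← hEeq]; exact E.apply_symm_apply y
  have hEself : ∀ x : ℝ, E.symm (psi z2 b x) = x := fun x => by
    rw [← hEeq]; exact E.symm_apply_apply x
  set K := psi z2 b (Real.log c10) + Hf z1 q c20 with hK
  set u : ℝ → ℝ := fun t => E.symm (K - Hf z1 q t) with hudef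
  set c1 : ℝ → ℝ := fun t => Real.exp (u t) with hc1def
  -- basic facts
  have hu20 : u c20 = Real.log c10 := by
    have : K - Hf z1 q c20 = psi z2 b (Real.log c10) := by rw [hK]; ring
    rw [hudef]; simp only [this, hEself]
  have hc1pos : ∀ t : ℝ, 0 < c1 t := fun t => Real.exp_pos _
  have hc120 : c1 c20 = c10 := by
    rw [hc1def]; simp only [hu20, Real.exp_log hc10]
  -- derivative of Hf
  have hHf : ∀ t : ℝ, 0 < t → HasDerivAt (Hf z1 q) (z1 / t + q) t := by
    intro t ht
    have h1 : HasDerivAt (fun s : ℝ => z1 * Real.log s) (z1 * t⁻¹) t :=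
      (Real.hasDerivAt_log ht.ne').const_mul z1
    have h2 : HasDerivAt (fun s : ℝ => q * s) (q * 1) t := (hasDerivAt_id t).const_mul q
    have h3 := h1.add h2
    simp only [mul_one] at h3
    have heq : z1 / t + q = z1 * t⁻¹ + q := by rw [div_eq_mul_inv]
    rw [heq]
    exact h3
  -- derivative of u
  have hu' : ∀ t : ℝ, 0 < t →
      HasDerivAt u ((-z2 + b * Real.exp (u t))⁻¹ * (-(z1 / t + q))) t := by
    intro t ht
    have hinner : HasDerivAt (fun s => K - Hf z1 q s) (-(z1 / t + q)) t := by
      exact (hHf t ht).const_sub K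
    have hsymm : HasDerivAt (fun y => E.symm y) (-z2 + b * Real.exp (u t))⁻¹ (K - Hf z1 q t) := by
      apply HasDerivAt.of_local_left_inverse
        (E.symm.continuous.continuousAt)
        (psi_hasDeriv z2 b (u t))
        (psi_deriv_pos hz2 hb (u t)).ne'
      exact Filter.Eventually.of_forall hEpsi
    exact hsymm.comp t hinner
  -- derivative of c1
  have hc1' : ∀ t : ℝ, 0 < t →
      HasDerivAt c1 (c1 t * ((-z2 + b * Real.exp (u t))⁻¹ * (-(z1 / t + q)))) t := by
    intro t ht
    exact (Real.hasDerivAt_exp (u t)).comp t (hu' t ht)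
  have hderivF : ∀ t : ℝ, 0 < t → HasDerivAt c1 (F z1 z2 g11 g22 g12 (c1 t) t) t := by
    intro t ht
    have hkey := key_alg z1 z2 g11 g22 g12 (Real.exp (u t)) t (Real.exp_pos _) ht
      (psi_deriv_pos hz2 hb (u t))
    simp only [Real.log_exp, ← hbdef, ← hqdef] at hkey
    have h := hc1' t ht
    have hc1t : c1 t = Real.exp (u t) := rfl
    rw [hc1t, ← hkey]
    exact h
  -- strict antitonicity
  have hHmono : ∀ x y : ℝ, 0 < x → x < y → Hf z1 q x < Hf z1 q y := by
    intro x y hx hxy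
    have h1 : z1 * Real.log x < z1 * Real.log y :=
      mul_lt_mul_of_pos_left (Real.log_lt_log hx hxy) hz1
    have h2 : q * x ≤ q * y := mul_le_mul_of_nonneg_left hxy.le hq
    unfold Hf; linarith
  have hanti : StrictAntiOn c1 (Set.Ioi (0:ℝ)) := by
    intro x hx y hy hxy
    have h1 : K - Hf z1 q y < K - Hf z1 q x := by
      have := hHmono x y hx hxy; linarith
    have h2 : u y < u x := E.symm.strictMono h1
    exact Real.exp_lt_exp.mpr h2
  refine ⟨c1, fun t _ => hc1pos t, hc120, hderivF, hanti, ?_⟩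
  -- Gronwall bounds
  have hc1le : ∀ t : ℝ, c20 ≤ t → c1 t ≤ c10 := by
    intro t ht
    rcases eq_or_lt_of_le ht with h | h
    · rw [← h, hc120]
    · rw [← hc120]
      exact (hanti.antitoneOn (Set.mem_Ioi.mpr hc20)
        (Set.mem_Ioi.mpr (hc20.trans h)) ht).trans_eq rfl
  have hm' : m = -((z1 / c20 + q) / (-z2)) := by
    rw [hm, hqdef]; field_simp [hz2.ne, hc20.ne']; ring
  have hM' : M = -(q / (-z2 + b * c10)) := by
    rw [hM,
      show z2 * (1 + g11 * c10) - z1 * g12 * c10 = -(-z2 + b * c10) by rw [hbdef]; ring,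
      div_neg]
  have hd10 : (0:ℝ) < -z2 + b * c10 := by
    have := mul_nonneg hb hc10.le; linarith
  -- bounds on the derivative of u for t ≥ c20
  have hdu : ∀ t : ℝ, c20 ≤ t →
      m ≤ (-z2 + b * Real.exp (u t))⁻¹ * (-(z1 / t + q)) ∧
      (-z2 + b * Real.exp (u t))⁻¹ * (-(z1 / t + q)) ≤ M := by
    intro t ht
    have ht0 : 0 < t := hc20.trans_le ht
    have hdt : 0 < -z2 + b * Real.exp (u t) := psi_deriv_pos hz2 hb (u t)
    have heq : (-z2 + b * Real.exp (u t))⁻¹ * (-(z1 / t + q)) =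
        -((z1 / t + q) / (-z2 + b * Real.exp (u t))) := by
      rw [div_eq_inv_mul]; ring
    have hNpos : 0 < z1 / t + q := by positivity
    have hN20 : z1 / t + q ≤ z1 / c20 + q := by
      have : z1 / t ≤ z1 / c20 := div_le_div_of_nonneg_left hz1.le hc20 ht
      linarith
    have hexp_le : Real.exp (u t) ≤ c10 := hc1le t ht
    have hbe : 0 ≤ b * Real.exp (u t) := mul_nonneg hb (Real.exp_pos _).le
    have hz1t : 0 < z1 / t := div_pos hz1 ht0
    constructor
    · rw [heq, hm']
      apply neg_le_neg
      have h20pos : 0 < z1 / c20 := div_pos hz1 hc20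
      apply div_le_div₀ (by linarith) hN20 (by linarith) (by linarith)
    · rw [heq, hM']
      apply neg_le_neg
      apply div_le_div₀ hNpos.le (by linarith) hdt
      have := mul_le_mul_of_nonneg_left hexp_le hb
      linarith
  -- integrate the bounds
  intro t ht
  have ht0 : 0 < t := hc20.trans_le ht
  have hcontu : ContinuousOn u (Set.Ici c20) := fun x hx =>
    ((hu' x (hc20.trans_le hx)).continuousAt).continuousWithinAt
  have hlow : m * (t - c20) ≤ u t - u c20 := by
    have hmono : MonotoneOn (fun s => u s - m * s) (Set.Ici c20) := by
      apply monotoneOn_of_deriv_nonneg (convex_Ici c20)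
      · exact (hcontu.sub ((continuous_const.mul continuous_id).continuousOn))
      · intro x hx
        rw [interior_Ici] at hx
        exact ((hu' x (hc20.trans hx)).sub
          (by simpa using (hasDerivAt_id x).const_mul m)).differentiableAt.differentiableWithinAt
      · intro x hx
        rw [interior_Ici] at hx
        have hD := ((hu' x (hc20.trans hx)).sub
          (by simpa using (hasDerivAt_id x).const_mul m : HasDerivAt (fun s : ℝ => m * s) m x))
        have hD' : HasDerivAt (fun s => u s - m * s) _ x := hD
        rw [hD'.deriv]
        have := (hdu x (le_of_lt hx)).1
        linarith
    have := hmono (Set.self_mem_Ici) (Set.mem_Ici.mpr ht) ht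
    simp only at this
    linarith
  have hhigh : u t - u c20 ≤ M * (t - c20) := by
    have hmono : MonotoneOn (fun s => M * s - u s) (Set.Ici c20) := by
      apply monotoneOn_of_deriv_nonneg (convex_Ici c20)
      · exact (((continuous_const.mul continuous_id).continuousOn).sub hcontu)
      · intro x hx
        rw [interior_Ici] at hx
        exact ((by simpa using (hasDerivAt_id x).const_mul M :
          HasDerivAt (fun s : ℝ => M * s) M x).sub
          (hu' x (hc20.trans hx))).differentiableAt.differentiableWithinAt
      · intro x hx
        rw [interior_Ici] at hx
        have hD := ((by simpa using (hasDerivAt_id x).const_mul M :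
          HasDerivAt (fun s : ℝ => M * s) M x).sub (hu' x (hc20.trans hx)))
        have hD' : HasDerivAt (fun s => M * s - u s) _ x := hD
        rw [hD'.deriv]
        have := (hdu x (le_of_lt hx)).2
        linarith
    have := hmono (Set.self_mem_Ici) (Set.mem_Ici.mpr ht) ht
    simp only at this
    linarith
  have hexp20 : Real.exp (u c20) = c10 := by rw [hu20, Real.exp_log hc10]
  have hsplit : c1 t = c10 * Real.exp (u t - u c20) := by
    have harg : u t = u c20 + (u t - u c20) := by ring
    calc c1 t = Real.exp (u t) := rfl
      _ = Real.exp (u c20 + (u t - u c20)) := by rw [← harg]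
      _ = Real.exp (u c20) * Real.exp (u t - u c20) := Real.exp_add _ _
      _ = c10 * Real.exp (u t - u c20) := by rw [hexp20]
  rw [hsplit]
  constructor
  · exact mul_le_mul_of_nonneg_left (Real.exp_le_exp.mpr hlow) hc10.le
  · exact mul_le_mul_of_nonneg_left (Real.exp_le_exp.mpr hhigh) hc10.le
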